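/- Let 𝒫 be a nonempty family of Borel probability measures on Ω = C₀^d(ℝ⁺) and define the upper expectation Ê[X] := sup_{P∈𝒫} ∫ X dP for nonnegative Borel measurable X. Fix p ≥ 1. If (X_n)_{n≥1} is a sequence of Borel measurable real-valued functions on Ω with Ê[|X_n|^p] < ∞ for every n and Ê[|X_n − X_m|^p] → 0 as n, m → ∞, then there exists a Borel measurable X : Ω → ℝ with Ê[|X|^p] < ∞ and Ê[|X_n − X|^p] → 0 as n → ∞. -/

import Mathlib

open MeasureTheory Filter Topology
open scoped NNReal ENNReal

noncomputable section

/-- The space `Ω = C₀^d(ℝ⁺)` of continuous paths `ω : [0,∞) → ℝ^d` with `ω 0 = 0`,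
with the topology of uniform convergence on compacts (induced by the metric `ρ`). -/
def OmegaC (d : ℕ) : Type := {ω : C(ℝ≥0, EuclideanSpace ℝ (Fin d)) // ω 0 = 0}

instance (d : ℕ) : TopologicalSpace (OmegaC d) := instTopologicalSpaceSubtype
instance (d : ℕ) : MeasurableSpace (OmegaC d) := borel _
instance (d : ℕ) : BorelSpace (OmegaC d) := ⟨rfl⟩

/-- The upper expectation `Ê[Y] = sup_{P∈𝒫} ∫ Y dP ∈ [0,∞]` of a nonnegative function,
where `Y` is given as the function `ω ↦ |f ω|^p`. -/
def upperExp {d : ℕ} (P : Set (Measure (OmegaC d))) (Y : OmegaC d → ℝ) : ℝ≥0∞ :=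
  ⨆ p ∈ P, ∫⁻ ω, ENNReal.ofReal (Y ω) ∂p

/-- Minkowski-type comparison inequality. -/
lemma mink_aux {α : Type*} [MeasurableSpace α] (μ : Measure α) {p : ℝ} (hp : 1 ≤ p)
    {f g h : α → ℝ≥0∞} (hg : Measurable g) (hh : Measurable h)
    (hfgh : ∀ a, f a ≤ g a + h a) :
    (∫⁻ a, f a ^ p ∂μ) ^ (1 / p) ≤
      (∫⁻ a, g a ^ p ∂μ) ^ (1 / p) + (∫⁻ a, h a ^ p ∂μ) ^ (1 / p) := by
  have h1 : (∫⁻ a, f a ^ p ∂μ) ≤ ∫⁻ a, (g + h) a ^ p ∂μ :=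
    lintegral_mono fun a => ENNReal.rpow_le_rpow (hfgh a) (le_trans zero_le_one hp)
  exact le_trans (ENNReal.rpow_le_rpow h1 (by positivity))
    (ENNReal.lintegral_Lp_add_le hg.aemeasurable hh.aemeasurable hp)

theorem stmt9 {d : ℕ} (hd : 1 ≤ d)
    (P : Set (Measure (OmegaC d))) (hne : P.Nonempty)
    (hprob : ∀ p ∈ P, IsProbabilityMeasure p)
    (p : ℝ) (hp : 1 ≤ p)
    (X : ℕ → OmegaC d → ℝ)
    (hmeas : ∀ n, Measurable (X n))
    (hfin : ∀ n, upperExp P (fun ω => |X n ω| ^ p) < ∞)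
    (hcauchy : Tendsto (fun nm : ℕ × ℕ =>
        upperExp P (fun ω => |X nm.1 ω - X nm.2 ω| ^ p)) atTop (𝓝 0)) :
    ∃ Y : OmegaC d → ℝ, Measurable Y ∧ upperExp P (fun ω => |Y ω| ^ p) < ∞ ∧
      Tendsto (fun n => upperExp P (fun ω => |X n ω - Y ω| ^ p)) atTop (𝓝 0) := by
  have p0 : (0 : ℝ) < p := lt_of_lt_of_le zero_lt_one hp
  have pne : p ≠ 0 := ne_of_gt p0
  -- rewrite upperExp in terms of `(ofReal |·|) ^ p`
  have hrw : ∀ f : OmegaC d → ℝ, upperExp P (fun ω => |f ω| ^ p)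
      = ⨆ μ ∈ P, ∫⁻ ω, (ENNReal.ofReal |f ω|) ^ p ∂μ := by
    intro f
    unfold upperExp
    refine iSup_congr fun μ => iSup_congr fun _ => lintegral_congr fun ω => ?_
    exact (ENNReal.ofReal_rpow_of_nonneg (abs_nonneg _) p0.le).symm
  have hle_upper : ∀ (f : OmegaC d → ℝ) (μ : Measure (OmegaC d)), μ ∈ P →
      (∫⁻ ω, (ENNReal.ofReal |f ω|) ^ p ∂μ) ≤ upperExp P (fun ω => |f ω| ^ p) := by
    intro f μ hμ
    rw [hrw]
    exact le_iSup₂ (f := fun μ _ => ∫⁻ ω, (ENNReal.ofReal |f ω|) ^ p ∂μ) μ hμ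
  -- Cauchy condition, quantitatively
  have hC : ∀ ε : ℝ≥0∞, ε ≠ 0 → ∃ M : ℕ, ∀ n m : ℕ, M ≤ n → M ≤ m →
      ∀ μ ∈ P, (∫⁻ ω, (ENNReal.ofReal |X n ω - X m ω|) ^ p ∂μ) ≤ ε := by
    intro ε hε
    obtain ⟨NN, hNN⟩ := ENNReal.tendsto_atTop_zero.mp hcauchy ε (pos_iff_ne_zero.mpr hε)
    refine ⟨max NN.1 NN.2, fun n m hn hm μ hμ => ?_⟩
    have h1 := hNN (n, m) ⟨le_trans (le_max_left _ _) hn, le_trans (le_max_right _ _) hm⟩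
    exact le_trans (hle_upper (fun ω => X n ω - X m ω) μ hμ) h1
  -- choose a rapidly Cauchy subsequence
  have hεk : ∀ k : ℕ, (((2 : ℝ≥0∞)⁻¹ ^ k) ^ p : ℝ≥0∞) ≠ 0 := by
    intro k
    apply ne_of_gt
    apply ENNReal.rpow_pos
    · exact ENNReal.pow_pos (by simp) k
    · exact ENNReal.pow_ne_top (by simp)
  choose N hN using fun k => hC (((2 : ℝ≥0∞)⁻¹ ^ k) ^ p) (hεk k)
  set φ : ℕ → ℕ := fun k => Nat.rec (N 0) (fun k ih => max (ih + 1) (N (k + 1))) k with hφ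
  have φsucc : ∀ k, φ (k + 1) = max (φ k + 1) (N (k + 1)) := fun k => rfl
  have φmono : StrictMono φ := strictMono_nat_of_lt_succ fun k => by
    rw [φsucc]; exact lt_of_lt_of_le (Nat.lt_succ_self _) (le_max_left _ _)
  have φge : ∀ k, N k ≤ φ k := by
    intro k
    cases k with
    | zero => exact le_refl _
    | succ k => rw [φsucc]; exact le_max_right _ _
  have hdiff : ∀ k, ∀ μ ∈ P,
      (∫⁻ ω, (ENNReal.ofReal |X (φ (k + 1)) ω - X (φ k) ω|) ^ p ∂μ)
        ≤ ((2 : ℝ≥0∞)⁻¹ ^ k) ^ p := by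
    intro k μ hμ
    exact hN k _ _ (le_trans (φge k) (φmono (Nat.lt_succ_self k)).le) (φge k) μ hμ
  -- the increments
  set F : ℕ → OmegaC d → ℝ≥0∞ :=
    fun k ω => ENNReal.ofReal |X (φ (k + 1)) ω - X (φ k) ω| with hF
  have Fmeas : ∀ k, Measurable (F k) := fun k =>
    ENNReal.measurable_ofReal.comp ((hmeas _).sub (hmeas _)).abs
  have hdiffJ : ∀ k, ∀ μ ∈ P, (∫⁻ ω, F k ω ^ p ∂μ) ^ (1 / p) ≤ (2 : ℝ≥0∞)⁻¹ ^ k := by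
    intro k μ hμ
    have h := ENNReal.rpow_le_rpow (hdiff k μ hμ) (le_of_lt (by positivity : (0:ℝ) < 1 / p))
    rw [one_div, ENNReal.rpow_rpow_inv pne] at h
    simp only [hF, one_div]
    exact h
  set G : OmegaC d → ℝ≥0∞ := fun ω => ∑' k, F k ω with hG
  have Gmeas : Measurable G := Measurable.ennreal_tsum Fmeas
  -- partial sums
  set S : ℕ → OmegaC d → ℝ≥0∞ := fun K ω => ∑ k ∈ Finset.range K, F k ω with hS
  have Smeas : ∀ K, Measurable (S K) := fun K => Finset.measurable_sum _ fun k _ => Fmeas k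
  have hSle : ∀ K, ∀ μ ∈ P, (∫⁻ ω, S K ω ^ p ∂μ) ^ (1 / p)
      ≤ ∑ k ∈ Finset.range K, (2 : ℝ≥0∞)⁻¹ ^ k := by
    intro K
    induction K with
    | zero =>
      intro μ hμ
      simp only [hS, Finset.range_zero, Finset.sum_empty, ENNReal.zero_rpow_of_pos p0,
        lintegral_zero, ENNReal.zero_rpow_of_pos (by positivity : (0:ℝ) < 1/p)]
      exact le_refl _
    | succ K ih =>
      intro μ hμ
      have h1 : (∫⁻ ω, S (K + 1) ω ^ p ∂μ) ^ (1 / p)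
          ≤ (∫⁻ ω, S K ω ^ p ∂μ) ^ (1 / p) + (∫⁻ ω, F K ω ^ p ∂μ) ^ (1 / p) := by
        apply mink_aux μ hp (Smeas K) (Fmeas K)
        intro a
        rw [hS]
        simp [Finset.sum_range_succ]
      rw [Finset.sum_range_succ]
      exact le_trans h1 (add_le_add (ih μ hμ) (hdiffJ K μ hμ))
  have hsum2 : ∀ K : ℕ, (∑ k ∈ Finset.range K, (2 : ℝ≥0∞)⁻¹ ^ k) ≤ 2 := by
    intro K
    calc (∑ k ∈ Finset.range K, (2 : ℝ≥0∞)⁻¹ ^ k) ≤ ∑' k, (2 : ℝ≥0∞)⁻¹ ^ k :=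
          ENNReal.sum_le_tsum _
      _ = (1 - 2⁻¹)⁻¹ := ENNReal.tsum_geometric _
      _ = 2 := by rw [ENNReal.one_sub_inv_two]; simp
  have hGp : ∀ μ ∈ P, (∫⁻ ω, G ω ^ p ∂μ) ≤ 2 ^ p := by
    intro μ hμ
    have hptws : ∀ ω, G ω ^ p = ⨆ K, S K ω ^ p := by
      intro ω
      have hmono : Monotone fun K => S K ω := fun a b hab => by
        apply Finset.sum_le_sum_of_subset (Finset.range_subset_range.mpr hab)
      have ht : Tendsto (fun K => S K ω) atTop (𝓝 (G ω)) := ENNReal.tendsto_nat_tsum _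
      have ht2 : Tendsto (fun K => S K ω ^ p) atTop (𝓝 (G ω ^ p)) :=
        (ENNReal.continuous_rpow_const.tendsto _).comp ht
      have hmono2 : Monotone fun K => S K ω ^ p := fun a b hab =>
        ENNReal.rpow_le_rpow (hmono hab) p0.le
      exact tendsto_nhds_unique ht2 (tendsto_atTop_iSup hmono2)
    calc (∫⁻ ω, G ω ^ p ∂μ) = ∫⁻ ω, ⨆ K, S K ω ^ p ∂μ := lintegral_congr hptws
      _ = ⨆ K, ∫⁻ ω, S K ω ^ p ∂μ := by
          apply lintegral_iSup
          · exact fun K => ENNReal.continuous_rpow_const.measurable.comp (Smeas K)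
          · intro a b hab ω
            exact ENNReal.rpow_le_rpow
              (Finset.sum_le_sum_of_subset (Finset.range_subset_range.mpr hab)) p0.le
      _ ≤ 2 ^ p := by
          apply iSup_le
          intro K
          have h1 : (∫⁻ ω, S K ω ^ p ∂μ) = ((∫⁻ ω, S K ω ^ p ∂μ) ^ (1 / p)) ^ p := by
            rw [one_div, ENNReal.rpow_inv_rpow pne]
          rw [h1]
          exact ENNReal.rpow_le_rpow (le_trans (hSle K μ hμ) (hsum2 K)) p0.le
  -- the set where the subsequence converges
  have hAmeas : MeasurableSet {ω | G ω < ∞} := measurableSet_lt Gmeas measurable_const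
  have hnull : ∀ μ ∈ P, ∀ᵐ ω ∂μ, G ω < ∞ := by
    intro μ hμ
    have hfin' : (∫⁻ ω, G ω ^ p ∂μ) ≠ ∞ :=
      ne_of_lt (lt_of_le_of_lt (hGp μ hμ)
        (ENNReal.rpow_lt_top_of_nonneg p0.le (by simp)))
    have h1 : ∀ᵐ ω ∂μ, G ω ^ p < ∞ :=
      ae_lt_top (ENNReal.continuous_rpow_const.measurable.comp Gmeas) hfin'
    filter_upwards [h1] with ω hω
    by_contra hc
    rw [not_lt, top_le_iff] at hc
    rw [hc, ENNReal.top_rpow_of_pos p0] at hω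
    exact absurd hω (lt_irrefl _)
  -- convergence of the subsequence where G is finite
  have hCauchy : ∀ ω, G ω < ∞ → ∃ l : ℝ, Tendsto (fun k => X (φ k) ω) atTop (𝓝 l) := by
    intro ω hω
    have h1 : ∑' k, (‖X (φ (k + 1)) ω - X (φ k) ω‖₊ : ℝ≥0∞) ≠ ∞ := by
      refine ne_of_lt (lt_of_le_of_lt (le_of_eq ?_) hω)
      refine tsum_congr fun k => ?_
      rw [hF]
      rw [← enorm_eq_nnnorm, ← ofReal_norm, Real.norm_eq_abs]
    have h2 : Summable fun k => ‖X (φ (k + 1)) ω - X (φ k) ω‖₊ :=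
      ENNReal.tsum_coe_ne_top_iff_summable.mp h1
    have h3 : Summable fun k => ‖X (φ (k + 1)) ω - X (φ k) ω‖ := by
      simpa [coe_nnnorm] using NNReal.summable_coe.mpr h2
    have h4 : CauchySeq fun k => X (φ k) ω := by
      apply cauchySeq_of_summable_dist
      refine h3.congr fun k => ?_
      rw [Real.dist_eq, Real.norm_eq_abs, abs_sub_comm]
    exact cauchySeq_tendsto_of_complete h4
  -- defining the limit
  set Z : OmegaC d → EReal := fun ω => liminf (fun k => ((X (φ k) ω : ℝ) : EReal)) atTop with hZ
  have Zmeas : Measurable Z :=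
    Measurable.liminf fun k => measurable_coe_real_ereal.comp (hmeas (φ k))
  set Y : OmegaC d → ℝ := fun ω => (Z ω).toReal with hY
  have Ymeas : Measurable Y := Zmeas.ereal_toReal
  have hYtend : ∀ ω, G ω < ∞ → Tendsto (fun k => X (φ k) ω) atTop (𝓝 (Y ω)) := by
    intro ω hω
    obtain ⟨l, hl⟩ := hCauchy ω hω
    have hl' : Tendsto (fun k => ((X (φ k) ω : ℝ) : EReal)) atTop (𝓝 (l : EReal)) :=
      (continuous_coe_real_ereal.tendsto l).comp hl
    have hZl : Z ω = (l : EReal) := hl'.liminf_eq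
    have hYl : Y ω = l := by rw [hY]; simp only [hZl, EReal.toReal_coe]
    rw [hYl]; exact hl
  -- the key Fatou bound
  have hkey : ∀ m : ℕ, ∀ μ ∈ P, (∫⁻ ω, (ENNReal.ofReal |X m ω - Y ω|) ^ p ∂μ)
      ≤ liminf (fun k => ∫⁻ ω, (ENNReal.ofReal |X m ω - X (φ k) ω|) ^ p ∂μ) atTop := by
    intro m μ hμ
    have hae : (∫⁻ ω, (ENNReal.ofReal |X m ω - Y ω|) ^ p ∂μ)
        = ∫⁻ ω, liminf (fun k => (ENNReal.ofReal |X m ω - X (φ k) ω|) ^ p) atTop ∂μ := by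
      apply lintegral_congr_ae
      filter_upwards [hnull μ hμ] with ω hω
      have h1 : Tendsto (fun k => (ENNReal.ofReal |X m ω - X (φ k) ω|) ^ p) atTop
          (𝓝 ((ENNReal.ofReal |X m ω - Y ω|) ^ p)) := by
        apply Tendsto.comp (ENNReal.continuous_rpow_const.tendsto _)
        apply Tendsto.comp (ENNReal.continuous_ofReal.tendsto _)
        apply Tendsto.comp (continuous_abs.tendsto _)
        exact (tendsto_const_nhds.sub (hYtend ω hω))
      exact h1.liminf_eq.symm
    rw [hae]
    apply lintegral_liminf_le
    intro k
    exact ENNReal.continuous_rpow_const.measurable.comp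
      (ENNReal.measurable_ofReal.comp ((hmeas m).sub (hmeas (φ k))).abs)
  -- convergence statement
  have hconv : ∀ ε : ℝ≥0∞, ε ≠ 0 → ∃ M : ℕ, ∀ m : ℕ, M ≤ m → ∀ μ ∈ P,
      (∫⁻ ω, (ENNReal.ofReal |X m ω - Y ω|) ^ p ∂μ) ≤ ε := by
    intro ε hε
    obtain ⟨M, hM⟩ := hC ε hε
    refine ⟨M, fun m hm μ hμ => ?_⟩
    refine le_trans (hkey m μ hμ) ?_
    apply Filter.liminf_le_of_frequently_le'
    apply Filter.Eventually.frequently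
    filter_upwards [eventually_ge_atTop M] with k hk
    exact hM m (φ k) hm (le_trans hk (le_trans (φmono.le_apply) (le_refl _))) μ hμ
  refine ⟨Y, Ymeas, ?_, ?_⟩
  · -- finiteness
    obtain ⟨M, hM⟩ := hconv 1 one_ne_zero
    set C : ℝ≥0∞ := upperExp P (fun ω => |X M ω| ^ p) with hCdef
    have hCne : C ≠ ∞ := ne_of_lt (hfin M)
    have hbound : ∀ μ ∈ P, (∫⁻ ω, (ENNReal.ofReal |Y ω|) ^ p ∂μ)
        ≤ (1 + C ^ (1 / p)) ^ p := by
      intro μ hμ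
      have h1 : (∫⁻ ω, (ENNReal.ofReal |Y ω|) ^ p ∂μ) ^ (1 / p)
          ≤ (∫⁻ ω, (ENNReal.ofReal |X M ω - Y ω|) ^ p ∂μ) ^ (1 / p)
            + (∫⁻ ω, (ENNReal.ofReal |X M ω|) ^ p ∂μ) ^ (1 / p) := by
        apply mink_aux μ hp
          (ENNReal.measurable_ofReal.comp ((hmeas M).sub Ymeas).abs)
          (ENNReal.measurable_ofReal.comp (hmeas M).abs)
        intro a
        show ENNReal.ofReal |Y a| ≤ ENNReal.ofReal |X M a - Y a| + ENNReal.ofReal |X M a|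
        rw [← ENNReal.ofReal_add (abs_nonneg _) (abs_nonneg _)]
        apply ENNReal.ofReal_le_ofReal
        have h5 : |Y a| ≤ |X M a| + |X M a - Y a| := by
          calc |Y a| = |X M a - (X M a - Y a)| := by rw [sub_sub_cancel]
            _ ≤ |X M a| + |X M a - Y a| := abs_sub _ _
        linarith
      have h2 : (∫⁻ ω, (ENNReal.ofReal |X M ω - Y ω|) ^ p ∂μ) ^ (1 / p) ≤ 1 := by
        have := hM M (le_refl M) μ hμ
        calc (∫⁻ ω, (ENNReal.ofReal |X M ω - Y ω|) ^ p ∂μ) ^ (1 / p)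
            ≤ (1 : ℝ≥0∞) ^ (1 / p) := ENNReal.rpow_le_rpow this (by positivity)
          _ = 1 := ENNReal.one_rpow _
      have h3 : (∫⁻ ω, (ENNReal.ofReal |X M ω|) ^ p ∂μ) ^ (1 / p) ≤ C ^ (1 / p) :=
        ENNReal.rpow_le_rpow (hle_upper (X M) μ hμ) (by positivity)
      have h4 : (∫⁻ ω, (ENNReal.ofReal |Y ω|) ^ p ∂μ)
          = ((∫⁻ ω, (ENNReal.ofReal |Y ω|) ^ p ∂μ) ^ (1 / p)) ^ p := by
        rw [one_div, ENNReal.rpow_inv_rpow pne]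
      rw [h4]
      exact ENNReal.rpow_le_rpow (le_trans h1 (add_le_add h2 h3)) p0.le
    have hfinb : ((1 + C ^ (1 / p)) ^ p : ℝ≥0∞) < ∞ := by
      apply ENNReal.rpow_lt_top_of_nonneg p0.le
      apply ENNReal.add_ne_top.mpr
      exact ⟨ENNReal.one_ne_top, ENNReal.rpow_ne_top_of_nonneg (by positivity) hCne⟩
    calc upperExp P (fun ω => |Y ω| ^ p)
        = ⨆ μ ∈ P, ∫⁻ ω, (ENNReal.ofReal |Y ω|) ^ p ∂μ := hrw Y
      _ ≤ (1 + C ^ (1 / p)) ^ p := iSup₂_le hbound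
      _ < ∞ := hfinb
  · -- convergence
    rw [ENNReal.tendsto_atTop_zero]
    intro ε hε
    obtain ⟨M, hM⟩ := hconv ε (ne_of_gt hε)
    refine ⟨M, fun m hm => ?_⟩
    rw [hrw (fun ω => X m ω - Y ω)]
    exact iSup₂_le fun μ hμ => hM m hm μ hμ
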